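/- arXiv:2102.02931 — 8 statements merged into one kernel-verified Lean document; each statement's English description precedes it below -/
import Mathlib

section
/- A matching M is fair if and only if it is induced by some cutoff scores, i.e., there exists a function d from projects to natural numbers such that every applicant is matched under M to the most preferred project (in her preference list) at which her score meets the cutoff d(p). -/
open Finset

/-- An instance of the two-sided matching problem: applicants `A` with strict preference
lists over acceptable projects, projects `P` with strict preference lists over
acceptable applicants (best first), and capacities. -/
structure MatchInst (A P : Type) where
  prefA : A → List P
  prefP : P → List A
  cap : P → ℕ

variable {A P : Type} [Fintype A] [Fintype P] [DecidableEq A] [DecidableEq P]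

/-- number of applicants matched to project `p` -/
def mcount (M : A → Option P) (p : P) : ℕ := (univ.filter fun a => M a = some p).card

/-- counts after adding one extra applicant to project `p` (the matching `M ∪ {(a,p)}`) -/
def addCount (M : A → Option P) (p : P) : P → ℕ :=
  fun q => mcount M q + if q = p then 1 else 0

/-- the matching `(M ∪ {(a,p)}) \ {(a, M(a))}` -/
def swap (M : A → Option P) (a : A) (p : P) : A → Option P := Function.update M a (some p)

/-- a feasibility function on (anonymous) distributions of applicants over projects,
satisfying the heredity property -/
def Heredity (f : (P → ℕ) → Prop) : Prop :=
  f (fun _ => 0) ∧ ∀ v w : P → ℕ, (∀ p, w p ≤ v p) → f v → f w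

namespace MatchInst

variable (I : MatchInst A P)

def accA (a : A) (p : P) : Prop := p ∈ I.prefA a
def accP (p : P) (a : A) : Prop := a ∈ I.prefP p
/-- rank of project `p` in applicant `a`'s list (0-indexed; lower is better) -/
def rkA (a : A) (p : P) : ℕ := (I.prefA a).idxOf p
/-- rank of applicant `a` in project `p`'s list (0-indexed; lower is better) -/
def rkP (p : P) (a : A) : ℕ := (I.prefP p).idxOf a
/-- score of applicant `a` at project `p`: `|A| - k + 1` if `a` is ranked `k`-th, `0` if unranked -/
def score (p : P) (a : A) : ℕ :=
  if a ∈ I.prefP p then Fintype.card A - (I.prefP p).idxOf a else 0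

def IsMatching (M : A → Option P) : Prop :=
  (∀ a p, M a = some p → I.accA a p ∧ I.accP p a) ∧ ∀ p, mcount M p ≤ I.cap p

/-- `a` strictly prefers project `p` to the assignment `o` (being unmatched is worst) -/
def Prefers (a : A) (p : P) (o : Option P) : Prop :=
  I.accA a p ∧ ∀ q, o = some q → I.rkA a p < I.rkA a q

/-- no justified envy -/
def Fair (M : A → Option P) : Prop :=
  ∀ a p, M a ≠ some p → I.Prefers a p (M a) →
    ∀ a', M a' = some p → I.rkP p a' < I.rkP p a

/-- applicant `a` is admissible at project `p` under cutoffs `d` -/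
def Adm (d : P → ℕ) (a : A) (p : P) : Prop :=
  I.accA a p ∧ I.accP p a ∧ d p ≤ I.score p a

/-- cutoffs `d` induce the matching `M`: every applicant is matched to her most
preferred project where she is admissible (and unmatched if there is none) -/
def Induces (d : P → ℕ) (M : A → Option P) : Prop :=
  ∀ a : A,
    (∀ p, M a = some p → I.Adm d a p ∧ ∀ q, I.Adm d a q → q ≠ p → I.rkA a p < I.rkA a q) ∧
    (M a = none → ∀ p, ¬ I.Adm d a p)

def Blocking (M : A → Option P) (a : A) (p : P) : Prop :=
  I.Prefers a p (M a) ∧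
    ((mcount M p < I.cap p ∧ I.accP p a) ∨ ∃ a', M a' = some p ∧ I.rkP p a < I.rkP p a')

def StronglyStable (f : (P → ℕ) → Prop) (M : A → Option P) : Prop :=
  I.IsMatching M ∧ f (mcount M) ∧
    ∀ a p, I.Blocking M a p →
      (∀ a', M a' = some p → I.rkP p a' < I.rkP p a) ∧ ¬ f (mcount (swap M a p))

/-- weak stability in terms of permitted blocking pairs -/
def WeaklyStableBlk (f : (P → ℕ) → Prop) (M : A → Option P) : Prop :=
  I.IsMatching M ∧ f (mcount M) ∧
    ∀ a p, I.Blocking M a p →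
      (∀ a', M a' = some p → I.rkP p a' < I.rkP p a) ∧ ¬ f (addCount M p)

def WeaklyNonWasteful (f : (P → ℕ) → Prop) (M : A → Option P) : Prop :=
  f (mcount M) ∧ ∀ a p, M a ≠ some p → I.accP p a → I.Prefers a p (M a) →
    ¬ f (addCount M p) ∨ I.cap p ≤ mcount M p

/-- weak stability as fairness plus weak non-wastefulness -/
def WeaklyStable (f : (P → ℕ) → Prop) (M : A → Option P) : Prop :=
  I.IsMatching M ∧ I.Fair M ∧ I.WeaklyNonWasteful f M

def CutoffNonWasteful (f : (P → ℕ) → Prop) (M : A → Option P) : Prop :=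
  f (mcount M) ∧ ∀ a p, M a ≠ some p → I.accP p a → I.Prefers a p (M a) →
    ¬ f (mcount (swap M a p)) ∨
    (∃ a', M a' ≠ some p ∧ I.accP p a' ∧ I.rkP p a' < I.rkP p a ∧
      I.Prefers a' p (M a') ∧ ¬ f (mcount (swap M a' p))) ∨
    I.cap p ≤ mcount M p

def CutoffStable (f : (P → ℕ) → Prop) (M : A → Option P) : Prop :=
  I.IsMatching M ∧ I.Fair M ∧ I.CutoffNonWasteful f M

/-- project `p` is unconstrained for `M`: one more applicant can be added to `p` feasibly -/
def Unconstrained (f : (P → ℕ) → Prop) (M : A → Option P) (p : P) : Prop :=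
  f (addCount M p)

/-- cutoffs after decreasing the cutoff of `p` by one -/
def decCut (d : P → ℕ) (p : P) : P → ℕ := Function.update d p (d p - 1)

/-- minimal cutoffs: no cutoff can be decreased keeping the induced matching feasible -/
def MinimalCutoffs (f : (P → ℕ) → Prop) (d : P → ℕ) : Prop :=
  ∀ p, d p = 0 ∨ ∀ M', I.Induces (decCut d p) M' → ¬ f (mcount M')

def StrictlyBetter (a : A) (o o' : Option P) : Prop :=
  ∃ p, o = some p ∧ I.accA a p ∧ ∀ q, o' = some q → I.rkA a p < I.rkA a q

def ParetoDominates (M' M : A → Option P) : Prop :=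
  (∀ a, M' a = M a ∨ I.StrictlyBetter a (M' a) (M a)) ∧
    ∃ a, I.StrictlyBetter a (M' a) (M a)

end MatchInst

lemma score_le_card (I : MatchInst A P) (hP : ∀ p, (I.prefP p).Nodup) (p : P) (a : A) :
    I.score p a ≤ Fintype.card A := by
  unfold MatchInst.score
  split <;> omega

lemma score_lt_of_rk (I : MatchInst A P) (hP : ∀ p, (I.prefP p).Nodup) {p : P} {a a' : A}
    (ha : a ∈ I.prefP p) (ha' : a' ∈ I.prefP p) (h : I.rkP p a' < I.rkP p a) :
    I.score p a < I.score p a' := by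
  unfold MatchInst.score
  unfold MatchInst.rkP at h
  have h1 : (I.prefP p).idxOf a < (I.prefP p).length := List.idxOf_lt_length_iff.mpr ha
  have h2 : (I.prefP p).length ≤ Fintype.card A := (hP p).length_le_card
  simp only [ha, ha', if_true]
  omega

/-- A matching `M` is fair if and only if it is induced by some cutoff scores. -/
theorem fair_iff_induced_by_cutoffs (I : MatchInst A P) (M : A → Option P)
    (hA : ∀ a, (I.prefA a).Nodup) (hP : ∀ p, (I.prefP p).Nodup)
    (hM : I.IsMatching M) :
    I.Fair M ↔ ∃ d : P → ℕ, (∀ p, d p ≤ Fintype.card A + 1) ∧ I.Induces d M := by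
  classical
  constructor
  · intro hF
    set S : P → Finset ℕ := fun p => (univ.filter fun a => M a = some p).image (I.score p)
      with hS
    refine ⟨fun p => if h : (S p).Nonempty then (S p).min' h else Fintype.card A + 1,
      ?_, ?_⟩
    · intro p
      by_cases h : (S p).Nonempty
      · simp only [h, dif_pos]
        obtain ⟨x, hx⟩ := h
        obtain ⟨a, -, rfl⟩ := mem_image.mp hx
        exact le_trans (le_trans (min'_le _ _ hx) (score_le_card I hP p a)) (by omega)
      · simp [h]
    · -- key: if a is NOT matched to q but would weakly like q (i.e. either unmatched or
      -- prefers q), then a is not admissible at q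
      have key : ∀ a q, M a ≠ some q → (∀ r, M a = some r → I.rkA a q < I.rkA a r) →
          ¬ I.Adm (fun p => if h : (S p).Nonempty then (S p).min' h else Fintype.card A + 1)
            a q := by
        intro a q hne hpref' hadm
        obtain ⟨haccA, haccP, hd⟩ := hadm
        have hpref : I.Prefers a q (M a) := ⟨haccA, hpref'⟩
        by_cases h : (S q).Nonempty
        · simp only [h, dif_pos] at hd
          have hmin := min'_mem (S q) h
          obtain ⟨a0, ha0mem, ha0⟩ := mem_image.mp hmin
          have ha0M : M a0 = some q := (mem_filter.mp ha0mem).2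
          have hrk := hF a q hne hpref a0 ha0M
          have := score_lt_of_rk I hP haccP ((hM.1 a0 q ha0M).2) hrk
          omega
        · simp only [h, dif_neg, not_false_iff] at hd
          have := score_le_card I hP q a
          omega
      intro a
      constructor
      · intro p hap
        have hacc := hM.1 a p hap
        refine ⟨⟨hacc.1, hacc.2, ?_⟩, ?_⟩
        · have hSp : I.score p a ∈ S p :=
            mem_image.mpr ⟨a, mem_filter.mpr ⟨mem_univ a, hap⟩, rfl⟩
          have h : (S p).Nonempty := ⟨_, hSp⟩
          simp only [h, dif_pos]
          exact min'_le _ _ hSp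
        · intro q hadm hqp
          by_contra hlt
          have hpq : p ∈ I.prefA a := hacc.1
          have hqq : q ∈ I.prefA a := hadm.1
          have hne : I.rkA a p ≠ I.rkA a q := by
            intro h
            exact hqp ((List.idxOf_inj hqq).mp h.symm)
          have hqlt : I.rkA a q < I.rkA a p := by omega
          have hMq : M a ≠ some q := by
            rw [hap]; intro h; exact hqp (Option.some.inj h).symm
          exact key a q hMq (fun r hr => by
            rw [hap] at hr; rw [← Option.some.inj hr]; exact hqlt) hadm
      · intro hnone q
        exact key a q (by rw [hnone]; simp) (fun r hr => by rw [hnone] at hr; cases hr)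
  · rintro ⟨d, -, hind⟩
    intro a p hne hpref a' ha'
    have haccA := hpref.1
    have hacc' := hM.1 a' p ha'
    have hadm' : I.Adm d a' p := ((hind a').1 p ha').1
    -- show a not admissible at p
    have hnadm : ¬ I.Adm d a p := by
      intro hadm
      cases hMa : M a with
      | none => exact (hind a).2 hMa p hadm
      | some r =>
        have hr := (hind a).1 r hMa
        have hrp : p ≠ r := by intro h; rw [h] at hne; exact hne hMa
        have := hr.2 p hadm hrp
        have := hpref.2 r hMa
        omega
    by_cases haccP : a ∈ I.prefP p
    · have hscore : I.score p a < d p := by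
        by_contra h
        exact hnadm ⟨haccA, haccP, by omega⟩
      have : I.score p a < I.score p a' := lt_of_lt_of_le hscore hadm'.2.2
      unfold MatchInst.score at this
      simp only [haccP, show a' ∈ I.prefP p from hacc'.2, if_true] at this
      unfold MatchInst.rkP
      have h1 : (I.prefP p).idxOf a < (I.prefP p).length := List.idxOf_lt_length_iff.mpr haccP
      have h2 : (I.prefP p).length ≤ Fintype.card A := (hP p).length_le_card
      have h3 : (I.prefP p).idxOf a' < (I.prefP p).length :=
        List.idxOf_lt_length_iff.mpr hacc'.2
      omega
    · unfold MatchInst.rkP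
      have h1 : (I.prefP p).idxOf a' < (I.prefP p).length :=
        List.idxOf_lt_length_iff.mpr hacc'.2
      have h2 : (I.prefP p).idxOf a = (I.prefP p).length :=
        List.idxOf_eq_length_iff.mpr haccP
      omega
end

section
/- A matching M is weakly stable if and only if it is induced by cutoff scores d such that d(p) = 0 for every project p that is unconstrained for M. -/
open Finset

variable {A P : Type} [Fintype A] [Fintype P] [DecidableEq A] [DecidableEq P]

/-- A matching `M` is weakly stable iff it is induced by cutoff scores `d`
with `d p = 0` for every project `p` that is unconstrained for `M`. -/
theorem weaklyStable_iff_induced_with_zero_cutoffs_on_unconstrained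
    (I : MatchInst A P) (f : (P → ℕ) → Prop) (M : A → Option P)
    (hA : ∀ a, (I.prefA a).Nodup) (hP : ∀ p, (I.prefP p).Nodup)
    (hf : Heredity f) (hcap : ∀ v, f v → ∀ p, v p ≤ I.cap p)
    (hM : I.IsMatching M) (hMf : f (mcount M)) :
    I.WeaklyStableBlk f M ↔
      ∃ d : P → ℕ, (∀ p, d p ≤ Fintype.card A + 1) ∧ I.Induces d M ∧
        ∀ p, MatchInst.Unconstrained f M p → d p = 0 := by
  classical
  -- basic facts about scores and ranks
  have hidx_lt : ∀ p a, a ∈ I.prefP p → I.rkP p a < Fintype.card A := by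
    intro p a ha
    exact lt_of_lt_of_le (List.idxOf_lt_length_iff.2 ha) ((hP p).length_le_card)
  have hscore_le : ∀ p a, I.score p a ≤ Fintype.card A := by
    intro p a
    unfold MatchInst.score
    split <;> omega
  have hscore_iff : ∀ p a b, a ∈ I.prefP p → b ∈ I.prefP p →
      (I.score p b ≤ I.score p a ↔ I.rkP p a ≤ I.rkP p b) := by
    intro p a b ha hb
    have h1 := hidx_lt p a ha
    have h2 := hidx_lt p b hb
    unfold MatchInst.score
    rw [if_pos ha, if_pos hb]
    unfold MatchInst.rkP at *
    omega
  have hrkP_inj : ∀ p a b, a ∈ I.prefP p → b ∈ I.prefP p → I.rkP p a = I.rkP p b → a = b := by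
    intro p a b ha hb h
    exact (List.idxOf_inj ha).1 h
  have haddp : ∀ p : P, addCount M p p = mcount M p + 1 := by
    intro p; simp [addCount]
  constructor
  · rintro ⟨hMm, hMf', hstab⟩
    set S : P → Finset A := fun p => univ.filter (fun a => M a = some p) with hSdef
    set d : P → ℕ := fun p =>
      if f (addCount M p) then 0 else
        if h : (S p).Nonempty then (S p).inf' h (I.score p) else Fintype.card A + 1
      with hddef
    -- key lemma: no applicant who strictly prefers p to her match is admissible at p
    have hkey : ∀ a p, I.Prefers a p (M a) → ¬ I.Adm d a p := by
      rintro a p hpref ⟨haA, haP, hds⟩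
      by_cases hun : f (addCount M p)
      · -- p unconstrained: (a,p) blocks, stability forbids feasibility of the addition
        have hcapp : mcount M p < I.cap p := by
          have := hcap _ hun p
          rw [haddp p] at this; omega
        have hblk : I.Blocking M a p := ⟨hpref, Or.inl ⟨hcapp, haP⟩⟩
        exact (hstab a p hblk).2 hun
      · -- p constrained
        have hdp : d p = if h : (S p).Nonempty then (S p).inf' h (I.score p)
            else Fintype.card A + 1 := by
          rw [hddef]; simp [hun]
        by_cases hne : (S p).Nonempty
        · rw [hdp, dif_pos hne] at hds
          obtain ⟨a', ha'S, ha'eq⟩ := Finset.exists_mem_eq_inf' hne (I.score p)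
          have ha'M : M a' = some p := by
            have := ha'S; rw [hSdef] at this; simpa using this
          have ha'P : a' ∈ I.prefP p := (hMm.1 a' p ha'M).2
          rw [ha'eq] at hds
          have hle : I.rkP p a ≤ I.rkP p a' := (hscore_iff p a a' haP ha'P).1 hds
          have hlt : I.rkP p a < I.rkP p a' := by
            rcases lt_or_eq_of_le hle with h | h
            · exact h
            · exfalso
              have := hrkP_inj p a a' haP ha'P h
              subst this
              exact absurd (hpref.2 p ha'M) (lt_irrefl _)
          have hblk : I.Blocking M a p := ⟨hpref, Or.inr ⟨a', ha'M, hlt⟩⟩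
          have := (hstab a p hblk).1 a' ha'M
          omega
        · rw [hdp, dif_neg hne] at hds
          have := hscore_le p a
          omega
    refine ⟨d, ?_, ?_, ?_⟩
    · -- cutoffs bounded
      intro p
      rw [hddef]
      dsimp only
      split
      · omega
      · split
        · rename_i hne
          obtain ⟨a₀, ha₀⟩ := id hne
          exact le_trans (le_trans (Finset.inf'_le _ ha₀) (hscore_le p a₀)) (by omega)
        · omega
    · -- d induces M
      intro a
      constructor
      · intro p hap
        have haA : I.accA a p := (hMm.1 a p hap).1
        have haP : I.accP p a := (hMm.1 a p hap).2
        have haS : a ∈ S p := by rw [hSdef]; simp [hap]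
        have hAdm : I.Adm d a p := by
          refine ⟨haA, haP, ?_⟩
          rw [hddef]
          dsimp only
          split
          · omega
          · rw [dif_pos ⟨a, haS⟩]
            exact Finset.inf'_le _ haS
        refine ⟨hAdm, ?_⟩
        intro q hq hqp
        by_contra hlt
        push_neg at hlt
        have hqA : q ∈ I.prefA a := hq.1
        have hpA : p ∈ I.prefA a := haA
        have hne : I.rkA a q ≠ I.rkA a p := fun h =>
          hqp ((List.idxOf_inj hqA).1 h)
        have hstrict : I.rkA a q < I.rkA a p := lt_of_le_of_ne hlt hne
        have hpref : I.Prefers a q (M a) := by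
          refine ⟨hq.1, ?_⟩
          intro q' hq'
          rw [hap] at hq'
          injection hq' with h
          subst h
          exact hstrict
        exact hkey a q hpref hq
      · intro hnone p hAdm
        have hpref : I.Prefers a p (M a) := by
          refine ⟨hAdm.1, ?_⟩
          intro q hq
          rw [hnone] at hq
          exact absurd hq (by simp)
        exact hkey a p hpref hAdm
    · -- zero cutoffs on unconstrained projects
      intro p hun
      rw [hddef]
      simp [MatchInst.Unconstrained] at hun
      simp [hun]
  · rintro ⟨d, hdle, hind, hzero⟩
    refine ⟨hM, hMf, ?_⟩
    rintro a p ⟨hpref, hblk⟩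
    -- a is acceptable to p
    have haP : a ∈ I.prefP p := by
      rcases hblk with ⟨_, h⟩ | ⟨a', ha'M, hrk⟩
      · exact h
      · have ha'P : a' ∈ I.prefP p := (hM.1 a' p ha'M).2
        have h1 : I.rkP p a' < (I.prefP p).length := List.idxOf_lt_length_iff.2 ha'P
        by_contra hna
        have : I.rkP p a = (I.prefP p).length := List.idxOf_eq_length_iff.2 hna
        omega
    have hMap : M a ≠ some p := by
      intro h
      exact absurd (hpref.2 p h) (lt_irrefl _)
    -- a cannot be admissible at p
    have hnotAdm : ¬ I.Adm d a p := by
      intro hAdm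
      cases hMa : M a with
      | none => exact (hind a).2 hMa p hAdm
      | some q =>
        have hpq : p ≠ q := by
          intro h; rw [h] at hMap; exact hMap hMa
        have := ((hind a).1 q hMa).2 p hAdm hpq
        have := hpref.2 q hMa
        omega
    constructor
    · intro a' ha'M
      by_contra hge
      push_neg at hge
      have ha'P : a' ∈ I.prefP p := (hM.1 a' p ha'M).2
      have hAdm' : I.Adm d a' p := ((hind a').1 p ha'M).1
      have hscore : I.score p a' ≤ I.score p a := (hscore_iff p a a' haP ha'P).2 hge
      exact hnotAdm ⟨hpref.1, haP, le_trans hAdm'.2.2 hscore⟩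
    · intro hfeas
      have hdp : d p = 0 := hzero p hfeas
      exact hnotAdm ⟨hpref.1, haP, by rw [hdp]; omega⟩
end

section
/- A matching is cutoff stable if and only if it is induced by minimal cutoff scores, i.e., cutoff scores d such that for every project p, either d(p) = 0 or decreasing d(p) by one (keeping other cutoffs fixed) induces an infeasible matching. -/
open Finset

variable {A P : Type} [Fintype A] [Fintype P] [DecidableEq A] [DecidableEq P]

section ProofHelpers

variable {A P : Type} [Fintype A] [Fintype P] [DecidableEq A] [DecidableEq P]
variable {I : MatchInst A P}

lemma score_eq {p : P} {a : A} (h : I.accP p a) :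
    I.score p a = Fintype.card A - (I.prefP p).idxOf a := if_pos h

lemma score_pos' {p : P} {a : A} (hnd : (I.prefP p).Nodup) (h : I.accP p a) :
    1 ≤ I.score p a := by
  have h1 : (I.prefP p).idxOf a < (I.prefP p).length := List.idxOf_lt_length_iff.2 h
  have h2 := hnd.length_le_card
  rw [score_eq h]; omega

lemma score_le' {p : P} {a : A} : I.score p a ≤ Fintype.card A := by
  unfold MatchInst.score; split <;> omega

lemma rkP_lt_of_score_lt {p : P} {a b : A} (hnd : (I.prefP p).Nodup) (ha : I.accP p a)
    (h : I.score p b < I.score p a) : I.rkP p a < I.rkP p b := by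
  have hha : a ∈ I.prefP p := ha
  have h1 : (I.prefP p).idxOf a < (I.prefP p).length := List.idxOf_lt_length_iff.2 hha
  by_cases hb : b ∈ I.prefP p
  · have h2 : (I.prefP p).idxOf b < (I.prefP p).length := List.idxOf_lt_length_iff.2 hb
    have h3 := hnd.length_le_card
    rw [score_eq ha, score_eq (show I.accP p b from hb)] at h
    unfold MatchInst.rkP; omega
  · unfold MatchInst.rkP
    rw [List.idxOf_eq_length_iff.2 hb]
    exact h1

lemma score_lt_of_rkP_lt {p : P} {a b : A} (hnd : (I.prefP p).Nodup)
    (ha : I.accP p a) (hb : I.accP p b) (h : I.rkP p a < I.rkP p b) :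
    I.score p b < I.score p a := by
  have h2 : (I.prefP p).idxOf b < (I.prefP p).length := List.idxOf_lt_length_iff.2 hb
  have h3 := hnd.length_le_card
  rw [score_eq ha, score_eq hb]
  unfold MatchInst.rkP at h; omega

lemma score_injOn {p : P} {a b : A} (hnd : (I.prefP p).Nodup)
    (ha : I.accP p a) (hb : I.accP p b) (h : I.score p a = I.score p b) : a = b := by
  have hha : a ∈ I.prefP p := ha
  have hhb : b ∈ I.prefP p := hb
  have h1 : (I.prefP p).idxOf a < (I.prefP p).length := List.idxOf_lt_length_iff.2 hha
  have h2 : (I.prefP p).idxOf b < (I.prefP p).length := List.idxOf_lt_length_iff.2 hhb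
  have h3 := hnd.length_le_card
  rw [score_eq ha, score_eq hb] at h
  exact (List.idxOf_inj hha).1 (by omega)

lemma rkA_inj' {a : A} {p q : P} (hp : I.accA a p) (hq : I.accA a q)
    (h : I.rkA a p = I.rkA a q) : p = q :=
  (List.idxOf_inj hp).1 h

lemma induces_unique {d : P → ℕ} {M₁ M₂ : A → Option P}
    (h₁ : I.Induces d M₁) (h₂ : I.Induces d M₂) : M₁ = M₂ := by
  funext a
  obtain ⟨c₁, n₁⟩ := h₁ a
  obtain ⟨c₂, n₂⟩ := h₂ a
  cases e₁ : M₁ a with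
  | none =>
    cases e₂ : M₂ a with
    | none => rfl
    | some q => exact absurd (c₂ q e₂).1 (n₁ e₁ q)
  | some p =>
    cases e₂ : M₂ a with
    | none => exact absurd (c₁ p e₁).1 (n₂ e₂ p)
    | some q =>
      by_cases hpq : p = q
      · rw [hpq]
      · have l1 := (c₁ p e₁).2 q (c₂ q e₂).1 (Ne.symm hpq)
        have l2 := (c₂ q e₂).2 p (c₁ p e₁).1 hpq
        omega

lemma adm_dec_iff {d : P → ℕ} {p : P} (hd : 1 ≤ d p) {a : A} {q : P} :
    I.Adm (MatchInst.decCut d p) a q ↔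
      I.Adm d a q ∨ (q = p ∧ I.accA a p ∧ I.accP p a ∧ I.score p a = d p - 1) := by
  unfold MatchInst.Adm MatchInst.decCut
  by_cases hq : q = p
  · subst hq
    rw [Function.update_self]
    constructor
    · rintro ⟨h1, h2, h3⟩
      by_cases h4 : d q ≤ I.score q a
      · exact Or.inl ⟨h1, h2, h4⟩
      · exact Or.inr ⟨rfl, h1, h2, by omega⟩
    · rintro (⟨h1, h2, h3⟩ | ⟨-, h1, h2, h3⟩) <;> exact ⟨h1, h2, by omega⟩
  · rw [Function.update_of_ne hq]
    constructor
    · exact Or.inl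
    · rintro (h | ⟨h, -⟩)
      · exact h
      · exact absurd h hq

lemma not_adm_of_prefers {d : P → ℕ} {M : A → Option P} (hind : I.Induces d M)
    {a : A} {p : P} (hMa : M a ≠ some p) (hpref : I.Prefers a p (M a)) :
    ¬ I.Adm d a p := by
  intro hadm
  cases e : M a with
  | none => exact (hind a).2 e p hadm
  | some q =>
    have h1 := hpref.2 q e
    have h2 := ((hind a).1 q e).2 p hadm (fun h => hMa (h ▸ e))
    omega

lemma induces_swap {d : P → ℕ} {M : A → Option P} (hind : I.Induces d M)
    {p : P} {a₀ : A} (hd : 1 ≤ d p)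
    (hacc : I.accA a₀ p) (haccP : I.accP p a₀) (hs : I.score p a₀ = d p - 1)
    (hpref : I.Prefers a₀ p (M a₀))
    (huniq : ∀ a, I.accP p a → I.score p a = d p - 1 → a = a₀) :
    I.Induces (MatchInst.decCut d p) (swap M a₀ p) := by
  intro a
  by_cases haa : a = a₀
  · subst haa
    have hsw : swap M a p a = some p := by simp [swap]
    constructor
    · intro q hq
      rw [hsw] at hq
      injection hq with hq; subst hq
      refine ⟨(adm_dec_iff hd).2 (Or.inr ⟨rfl, hacc, haccP, hs⟩), ?_⟩
      intro q' hq' hqp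
      rcases (adm_dec_iff hd).1 hq' with h' | ⟨h', -⟩
      · cases e : M a with
        | none => exact absurd h' ((hind a).2 e q')
        | some q₀ =>
          have h1 := hpref.2 q₀ e
          by_cases hqq : q' = q₀
          · exact hqq ▸ h1
          · exact h1.trans (((hind a).1 q₀ e).2 q' h' hqq)
      · exact absurd h' hqp
    · intro h
      rw [hsw] at h
      exact absurd h (by simp)
  · have hsw : swap M a₀ p a = M a := by simp [swap, Function.update_of_ne haa]
    have hADM : ∀ q', I.Adm (MatchInst.decCut d p) a q' → I.Adm d a q' := by
      intro q' h'
      rcases (adm_dec_iff hd).1 h' with h'' | ⟨-, -, h2, h3⟩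
      · exact h''
      · exact absurd (huniq a h2 h3) haa
    constructor
    · intro q hq
      rw [hsw] at hq
      have base := (hind a).1 q hq
      exact ⟨(adm_dec_iff hd).2 (Or.inl base.1),
        fun q' h' hne => base.2 q' (hADM q' h') hne⟩
    · intro h q hq
      rw [hsw] at h
      exact (hind a).2 h q (hADM q hq)

lemma induces_dec_self {d : P → ℕ} {M : A → Option P} (hind : I.Induces d M)
    {p : P} (hd : 1 ≤ d p)
    (h : ∀ a, I.accA a p → I.accP p a → I.score p a = d p - 1 →
      ∃ q, M a = some q ∧ I.rkA a q < I.rkA a p) :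
    I.Induces (MatchInst.decCut d p) M := by
  intro a
  constructor
  · intro q hq
    have base := (hind a).1 q hq
    refine ⟨(adm_dec_iff hd).2 (Or.inl base.1), ?_⟩
    intro q' h' hne
    rcases (adm_dec_iff hd).1 h' with h'' | ⟨he, h1, h2, h3⟩
    · exact base.2 q' h'' hne
    · subst he
      obtain ⟨q₀, hq₀, hrk⟩ := h a h1 h2 h3
      rw [hq] at hq₀
      injection hq₀ with hq₀
      exact hq₀ ▸ hrk
  · intro hn q hq
    rcases (adm_dec_iff hd).1 hq with h'' | ⟨he, h1, h2, h3⟩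
    · exact (hind a).2 hn q h''
    · obtain ⟨q₀, hq₀, -⟩ := h a h1 h2 h3
      rw [hn] at hq₀
      exact absurd hq₀ (by simp)

lemma mcount_swap_self {M : A → Option P} {a : A} {p : P} (h : M a ≠ some p) :
    mcount (swap M a p) p = mcount M p + 1 := by
  unfold mcount swap
  have hset : (univ.filter fun x => Function.update M a (some p) x = some p)
      = insert a (univ.filter fun x => M x = some p) := by
    ext x
    by_cases hx : x = a
    · subst hx; simp [Function.update_self]
    · simp [Function.update_of_ne hx, hx]
  rw [hset, Finset.card_insert_of_notMem (by simp [h])]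

end ProofHelpers

/-- A matching is cutoff stable iff it is induced by minimal cutoff scores. -/
theorem cutoffStable_iff_induced_by_minimal_cutoffs
    (I : MatchInst A P) (f : (P → ℕ) → Prop) (M : A → Option P)
    (hA : ∀ a, (I.prefA a).Nodup) (hP : ∀ p, (I.prefP p).Nodup)
    (hf : Heredity f) (hcap : ∀ v, f v → ∀ p, v p ≤ I.cap p)
    (hM : I.IsMatching M) :
    I.CutoffStable f M ↔
      ∃ d : P → ℕ, (∀ p, d p ≤ Fintype.card A + 1) ∧ I.Induces d M ∧
        f (mcount M) ∧ I.MinimalCutoffs f d := by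
  classical
  constructor
  · rintro ⟨hIsM, hfair, hf0, hblock⟩
    set d : P → ℕ := fun p => univ.sup
      (fun a => if (M a ≠ some p ∧ I.accP p a ∧ I.Prefers a p (M a)) then I.score p a + 1 else 0)
      with hd_def
    have hThr_le : ∀ p a, M a ≠ some p → I.accP p a → I.Prefers a p (M a) →
        I.score p a + 1 ≤ d p := by
      intro p a h1 h2 h3
      have h0 : (if (M a ≠ some p ∧ I.accP p a ∧ I.Prefers a p (M a))
          then I.score p a + 1 else 0) ≤ d p := by
        rw [hd_def]
        exact Finset.le_sup (f := fun a => if (M a ≠ some p ∧ I.accP p a ∧ I.Prefers a p (M a))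
          then I.score p a + 1 else 0) (mem_univ a)
      rwa [if_pos ⟨h1, h2, h3⟩] at h0
    have hd_le : ∀ p (s : ℕ), (∀ a, M a ≠ some p → I.accP p a → I.Prefers a p (M a) →
        I.score p a + 1 ≤ s) → d p ≤ s := by
      intro p s h
      rw [hd_def]
      refine Finset.sup_le fun a _ => ?_
      show (if (M a ≠ some p ∧ I.accP p a ∧ I.Prefers a p (M a))
          then I.score p a + 1 else 0) ≤ s
      by_cases hc : M a ≠ some p ∧ I.accP p a ∧ I.Prefers a p (M a)
      · rw [if_pos hc]; exact h a hc.1 hc.2.1 hc.2.2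
      · rw [if_neg hc]; exact Nat.zero_le s
    have hsc : ∀ p a a', M a' = some p → M a ≠ some p → I.accP p a → I.Prefers a p (M a) →
        I.score p a + 1 ≤ I.score p a' := by
      intro p a a' hMa' h1 h2 h3
      have hrk := hfair a p h1 h3 a' hMa'
      have ha'mem : I.accP p a' := (hIsM.1 a' p hMa').2
      have := score_lt_of_rkP_lt (hP p) ha'mem h2 hrk
      omega
    have hindM : I.Induces d M := by
      intro a
      constructor
      · intro p hp
        have haccA := (hIsM.1 a p hp).1
        have haccP := (hIsM.1 a p hp).2
        have hadm : I.Adm d a p :=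
          ⟨haccA, haccP, hd_le p _ (fun a'' h1 h2 h3 => hsc p a'' a hp h1 h2 h3)⟩
        refine ⟨hadm, ?_⟩
        intro q hq hne
        by_contra hcon
        have hne' : I.rkA a p ≠ I.rkA a q := fun h => hne (rkA_inj' haccA hq.1 h).symm
        have hlt : I.rkA a q < I.rkA a p := by omega
        have hMq : M a ≠ some q := fun h => hne (by rw [hp] at h; injection h with h2; exact h2.symm)
        have hpref : I.Prefers a q (M a) := ⟨hq.1, fun q' hq' => by
          rw [hp] at hq'; injection hq' with hq'; exact hq' ▸ hlt⟩
        have h5 := hThr_le q a hMq hq.2.1 hpref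
        have h6 := hq.2.2
        omega
      · intro hn p hadm
        have hpref : I.Prefers a p (M a) := ⟨hadm.1, fun q hq => by rw [hn] at hq; cases hq⟩
        have h5 := hThr_le p a (by rw [hn]; simp) hadm.2.1 hpref
        have h6 := hadm.2.2
        omega
    refine ⟨d, ?_, hindM, hf0, ?_⟩
    · intro p
      refine hd_le p _ (fun a _ _ _ => ?_)
      have := score_le' (I := I) (p := p) (a := a)
      omega
    · intro p
      by_cases hdp : d p = 0
      · exact Or.inl hdp
      · right
        intro M' hM' hfM'
        have hne : (univ : Finset A).Nonempty := by
          by_contra h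
          rw [not_nonempty_iff_eq_empty] at h
          exact hdp (by rw [hd_def, h]; simp)
        obtain ⟨a₀, -, ha₀⟩ := Finset.exists_mem_eq_sup univ hne
          (fun a => if (M a ≠ some p ∧ I.accP p a ∧ I.Prefers a p (M a))
            then I.score p a + 1 else 0)
        replace ha₀ : d p = (if (M a₀ ≠ some p ∧ I.accP p a₀ ∧ I.Prefers a₀ p (M a₀))
            then I.score p a₀ + 1 else 0) := by
          rw [hd_def]; exact ha₀
        have hThr₀ : M a₀ ≠ some p ∧ I.accP p a₀ ∧ I.Prefers a₀ p (M a₀) := by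
          by_contra h
          rw [if_neg h] at ha₀
          exact hdp ha₀
        rw [if_pos hThr₀] at ha₀
        obtain ⟨hMa₀, haccP₀, hpref₀⟩ := hThr₀
        have hd1 : 1 ≤ d p := by omega
        have huniq : ∀ a', I.accP p a' → I.score p a' = d p - 1 → a' = a₀ := by
          intro a' h1 h2
          exact score_injOn (hP p) h1 haccP₀ (by omega)
        have hswap := induces_swap hindM hd1 hpref₀.1 haccP₀ (by omega) hpref₀ huniq
        have hMM : M' = swap M a₀ p := induces_unique hM' hswap
        rw [hMM] at hfM'
        rcases hblock a₀ p hMa₀ haccP₀ hpref₀ with h | ⟨a', h1, h2, h3, h4, h5⟩ | h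
        · exact h hfM'
        · have h6 := hThr_le p a' h1 h2 h4
          have h7 := score_lt_of_rkP_lt (hP p) h2 haccP₀ h3
          omega
        · have h8 := hcap _ hfM' p
          rw [mcount_swap_self hMa₀] at h8
          omega
  · rintro ⟨d, hdle, hind, hfM, hmin⟩
    refine ⟨hM, ?_, hfM, ?_⟩
    · intro a p hMa hpref a' hMa'
      have hadm' := ((hind a').1 p hMa').1
      have hnadm := not_adm_of_prefers hind hMa hpref
      by_cases haccP : I.accP p a
      · have hscore : I.score p a < d p := by
          by_contra h
          exact hnadm ⟨hpref.1, haccP, by omega⟩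
        exact rkP_lt_of_score_lt (hP p) hadm'.2.1 (by have := hadm'.2.2; omega)
      · have h1 : (I.prefP p).idxOf a' < (I.prefP p).length :=
          List.idxOf_lt_length_iff.2 hadm'.2.1
        show (I.prefP p).idxOf a' < (I.prefP p).idxOf a
        rw [List.idxOf_eq_length_iff.2 haccP]
        exact h1
    · intro a p hMa haccP hpref
      have hnadm := not_adm_of_prefers hind hMa hpref
      have hsa : I.score p a < d p := by
        by_contra h
        exact hnadm ⟨hpref.1, haccP, by omega⟩
      have hspos := score_pos' (hP p) haccP
      have hd1 : 1 ≤ d p := by omega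
      have hmin' := (hmin p).resolve_left (by omega)
      by_cases hex : ∃ a₁, I.accA a₁ p ∧ I.accP p a₁ ∧ I.score p a₁ = d p - 1 ∧
          I.Prefers a₁ p (M a₁)
      · obtain ⟨a₁, h1, h2, h3, h4⟩ := hex
        have hMa₁ : M a₁ ≠ some p := by
          intro e
          have := ((hind a₁).1 p e).1.2.2
          omega
        have huniq : ∀ a', I.accP p a' → I.score p a' = d p - 1 → a' = a₁ :=
          fun a' ha' hs' => score_injOn (hP p) ha' h2 (hs'.trans h3.symm)
        have hswapind := induces_swap hind hd1 h1 h2 h3 h4 huniq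
        have hnf : ¬ f (mcount (swap M a₁ p)) := hmin' _ hswapind
        by_cases heq : a = a₁
        · exact Or.inl (heq ▸ hnf)
        · refine Or.inr (Or.inl ⟨a₁, hMa₁, h2, ?_, h4, hnf⟩)
          have hne' : I.score p a ≠ d p - 1 := fun h => heq (huniq a haccP h)
          exact rkP_lt_of_score_lt (hP p) h2 (by omega)
      · exfalso
        push_neg at hex
        refine hmin' M (induces_dec_self hind hd1 ?_) hfM
        intro a' h1 h2 h3
        cases e : M a' with
        | none =>
          exact absurd (⟨h1, fun q hq => by rw [e] at hq; cases hq⟩ : I.Prefers a' p (M a'))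
            (hex a' h1 h2 h3)
        | some q =>
          refine ⟨q, rfl, ?_⟩
          have hnp := hex a' h1 h2 h3
          have hqmem : I.accA a' q := (hM.1 a' q e).1
          have hpq : p ≠ q := by
            rintro rfl
            have := ((hind a').1 p e).1.2.2
            omega
          have hnlt : ¬ I.rkA a' p < I.rkA a' q := fun hlt => hnp ⟨h1, fun q' hq' => by
            rw [e] at hq'; injection hq' with hq'; exact hq' ▸ hlt⟩
          have hne : I.rkA a' p ≠ I.rkA a' q := fun h => hpq (rkA_inj' h1 hqmem h)
          omega
end

section
/- Every strongly stable matching is cutoff stable. -/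
open Finset

variable {A P : Type} [Fintype A] [Fintype P] [DecidableEq A] [DecidableEq P]

/-- Every strongly stable matching is cutoff stable. -/
theorem stronglyStable_implies_cutoffStable
    (I : MatchInst A P) (f : (P → ℕ) → Prop) (M : A → Option P)
    (hA : ∀ a, (I.prefA a).Nodup) (hP : ∀ p, (I.prefP p).Nodup) :
    I.StronglyStable f M → I.CutoffStable f M := by
  rintro ⟨hM, hf, hblk⟩
  refine ⟨hM, ?_, hf, ?_⟩
  · intro a p hne hpref a' ha'
    have haccP' : a' ∈ I.prefP p := (hM.1 a' p ha').2
    have hlt' : (I.prefP p).idxOf a' < (I.prefP p).length :=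
      List.idxOf_lt_length_iff.2 haccP'
    by_cases hmem : a ∈ I.prefP p
    · by_contra hlt
      push_neg at hlt
      rcases lt_or_eq_of_le hlt with h | h
      · have hb : I.Blocking M a p := ⟨hpref, Or.inr ⟨a', ha', h⟩⟩
        have := (hblk a p hb).1 a' ha'
        omega
      · have : a' = a := (List.idxOf_inj haccP').1 h.symm
        exact hne (this ▸ ha')
    · have h1 : (I.prefP p).idxOf a = (I.prefP p).length :=
        List.idxOf_eq_length_iff.2 hmem
      simp only [MatchInst.rkP]
      omega
  · intro a p hne haccP hpref
    by_cases hcap : mcount M p < I.cap p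
    · exact Or.inl (hblk a p ⟨hpref, Or.inl ⟨hcap, haccP⟩⟩).2
    · exact Or.inr (Or.inr (by omega))
end

section
/- Every cutoff stable matching is weakly stable. -/
open Finset

variable {A P : Type} [Fintype A] [Fintype P] [DecidableEq A] [DecidableEq P]

lemma swap_le_addCount (M : A → Option P) (a : A) (p q : P) :
    mcount (swap M a p) q ≤ addCount M p q := by
  unfold mcount addCount swap
  by_cases hq : q = p
  · subst hq
    simp only [if_pos rfl]
    have hsub : (univ.filter fun b => Function.update M a (some q) b = some q) ⊆
        insert a (univ.filter fun b => M b = some q) := by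
      intro b hb
      simp only [mem_filter, mem_univ, true_and, Function.update_apply] at hb
      by_cases hba : b = a
      · subst hba; exact mem_insert_self _ _
      · simp only [if_neg hba] at hb
        exact mem_insert_of_mem (by simp [hb])
    calc (univ.filter fun b => Function.update M a (some q) b = some q).card
        ≤ (insert a (univ.filter fun b => M b = some q)).card := card_le_card hsub
      _ ≤ (univ.filter fun b => M b = some q).card + 1 := card_insert_le _ _
  · simp only [if_neg hq, add_zero]
    apply card_le_card
    intro b hb
    simp only [mem_filter, mem_univ, true_and, Function.update_apply] at hb ⊢
    by_cases hba : b = a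
    · simp [hba] at hb; exact absurd hb.symm hq
    · simpa [if_neg hba] using hb

/-- Every cutoff stable matching is weakly stable. -/
theorem cutoffStable_implies_weaklyStable
    (I : MatchInst A P) (f : (P → ℕ) → Prop) (M : A → Option P)
    (hf : Heredity f) :
    I.CutoffStable f M → I.WeaklyStable f M := by
  rintro ⟨hM, hfair, hf0, hcnw⟩
  refine ⟨hM, hfair, hf0, fun a p h1 h2 h3 => ?_⟩
  rcases hcnw a p h1 h2 h3 with h | ⟨a', _, _, _, _, h⟩ | h
  · exact Or.inl fun hc => h (hf.2 _ _ (fun q => swap_le_addCount M a p q) hc)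
  · exact Or.inl fun hc => h (hf.2 _ _ (fun q => swap_le_addCount M a' p q) hc)
  · exact Or.inr h
end

section
/- In the greedy cutoff-decreasing process, decreasing the cutoff of one project by one changes the induced matching by at most moving a single applicant: if M is induced by cutoffs d, p is a project with d(p) >= 1, and a is the applicant with score d(p)-1 at p (if any), then the matching induced by d^{-p} equals M if a does not prefer p to M(a), and equals (M ∪ {(a,p)}) \ {(a,M(a))} if a prefers p to M(a). -/
open Finset

variable {A P : Type} [Fintype A] [Fintype P] [DecidableEq A] [DecidableEq P]

/-- decreasing the cutoff of one project by one changes the induced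
matching by at most moving a single applicant. -/
theorem decrement_cutoff_moves_at_most_one_applicant
    (I : MatchInst A P) (M : A → Option P) (d : P → ℕ) (p : P) (a : A)
    (hA : ∀ a, (I.prefA a).Nodup) (hP : ∀ p, (I.prefP p).Nodup)
    (hind : I.Induces d M) (hd : 1 ≤ d p)
    (hacc : I.accP p a) (hsc : I.score p a = d p - 1)
    (huniq : ∀ a', I.accP p a' → I.score p a' = d p - 1 → a' = a) :
    (¬ I.Prefers a p (M a) → I.Induces (MatchInst.decCut d p) M) ∧
    (I.Prefers a p (M a) → I.Induces (MatchInst.decCut d p) (Function.update M a (some p))) := by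
  have hmono : ∀ b q, I.Adm d b q → I.Adm (MatchInst.decCut d p) b q := by
    rintro b q ⟨h1, h2, h3⟩
    refine ⟨h1, h2, le_trans ?_ h3⟩
    unfold MatchInst.decCut
    rcases eq_or_ne q p with rfl | h
    · simp
    · simp [Function.update_of_ne h]
  have hkey : ∀ b q, I.Adm (MatchInst.decCut d p) b q →
      I.Adm d b q ∨ (q = p ∧ b = a ∧ I.accA b p) := by
    rintro b q ⟨h1, h2, h3⟩
    rcases eq_or_ne q p with rfl | h
    · by_cases hs : d q ≤ I.score q b
      · exact Or.inl ⟨h1, h2, hs⟩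
      · have hsc' : I.score q b = d q - 1 := by
          unfold MatchInst.decCut at h3; simp at h3; omega
        have hb := huniq b h2 hsc'
        exact Or.inr ⟨rfl, hb, hb ▸ h1⟩
    · refine Or.inl ⟨h1, h2, ?_⟩
      unfold MatchInst.decCut at h3
      rwa [Function.update_of_ne h] at h3
  have hinj : ∀ b (q r : P), I.accA b q → I.accA b r → I.rkA b q = I.rkA b r → q = r := by
    intro b q r hq hr h
    exact (List.idxOf_inj hq).mp h
  constructor
  · intro hnp b
    obtain ⟨hb1, hb2⟩ := hind b
    constructor
    · intro q hq
      obtain ⟨hadm, hopt⟩ := hb1 q hq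
      refine ⟨hmono _ _ hadm, ?_⟩
      intro r hr hrq
      rcases hkey _ _ hr with h | ⟨rfl, rfl, hap⟩
      · exact hopt r h hrq
      · -- b = a, r = p, M a = some q
        have hne : ¬ (∀ q', M b = some q' → I.rkA b r < I.rkA b q') :=
          fun h => hnp ⟨hap, h⟩
        push_neg at hne
        obtain ⟨q', hq', hle⟩ := hne
        rw [hq] at hq'
        injection hq' with hq'
        subst hq'
        have : I.rkA b q ≠ I.rkA b r := fun h => hrq (hinj b q r hadm.1 hap h).symm
        omega
    · intro hn r hr
      rcases hkey _ _ hr with h | ⟨rfl, rfl, hap⟩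
      · exact hb2 hn r h
      · exact hnp ⟨hap, fun q hq => by rw [hn] at hq; cases hq⟩
  · intro hpref b
    rcases eq_or_ne b a with rfl | hba
    · constructor
      · intro q hq
        rw [Function.update_self] at hq
        injection hq with hq
        subst hq
        refine ⟨⟨hpref.1, hacc, ?_⟩, ?_⟩
        · unfold MatchInst.decCut; rw [Function.update_self, hsc]
        · intro r hr hrp
          rcases hkey _ _ hr with h | ⟨rfl, _, _⟩
          · cases hMa : M b with
            | none => exact absurd h ((hind b).2 hMa r)
            | some q0 =>
              have h1 := hpref.2 q0 hMa
              rcases eq_or_ne r q0 with rfl | hr0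
              · exact h1
              · exact h1.trans (((hind b).1 q0 hMa).2 r h hr0)
          · exact absurd rfl hrp
      · intro hn
        rw [Function.update_self] at hn
        cases hn
    · rw [show Function.update M a (some p) b = M b from Function.update_of_ne hba _ _] at *
      obtain ⟨hb1, hb2⟩ := hind b
      constructor
      · intro q hq
        obtain ⟨hadm, hopt⟩ := hb1 q hq
        refine ⟨hmono _ _ hadm, ?_⟩
        intro r hr hrq
        rcases hkey _ _ hr with h | ⟨rfl, rfl, _⟩
        · exact hopt r h hrq
        · exact absurd rfl hba
      · intro hn r hr
        rcases hkey _ _ hr with h | ⟨rfl, rfl, _⟩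
        · exact hb2 hn r h
        · exact absurd rfl hba
end

section
/- The cutoff-decreasing algorithm is not strategyproof for applicants: in the instance with A = {a1,a2}, P = {p1,p2} each of capacity 1, one supervisor s supervising both projects with budget 1, preferences a1: p2,p1; a2: p2; p1: a2,a1; p2: a2,a1, and project processing order (p1,p2), the algorithm outputs {(a1,p1)}, but if a2 misreports her preference as p2,p1 the algorithm outputs {(a2,p2)}, which a2 strictly prefers to being unmatched. -/
open Finset

variable {A P : Type} [Fintype A] [Fintype P] [DecidableEq A] [DecidableEq P]

section Algorithm

instance (I : MatchInst A P) (d : P → ℕ) (a : A) (p : P) : Decidable (I.Adm d a p) :=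
  decidable_of_iff (p ∈ I.prefA a ∧ a ∈ I.prefP p ∧ d p ≤ I.score p a) Iff.rfl

variable [LinearOrder P]

/-- the matching induced by cutoffs `d`: each applicant goes to her most preferred
project where she is admissible -/
def MatchInst.inducedM (I : MatchInst A P) (d : P → ℕ) (a : A) : Option P :=
  ((univ.filter fun p => I.Adm d a p).sort (· ≤ ·)).argmin fun p => I.rkA a p

/-- the cutoff of `p` can be decreased by one keeping the induced matching feasible -/
def MatchInst.DecStep (I : MatchInst A P) (f : (P → ℕ) → Prop) (d : P → ℕ) (p : P) : Prop :=
  1 ≤ d p ∧ f (mcount (I.inducedM (MatchInst.decCut d p)))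

/-- one step of the cutoff-decreasing algorithm: decrement the cutoff of the first
project (w.r.t. the processing order `ord`) whose decrement keeps feasibility -/
def MatchInst.AlgStep (I : MatchInst A P) (f : (P → ℕ) → Prop) (ord : P → P → Prop)
    (d d' : P → ℕ) : Prop :=
  ∃ p, I.DecStep f d p ∧ (∀ q, ord q p → ¬ I.DecStep f d q) ∧ d' = MatchInst.decCut d p

/-- the cutoff-decreasing algorithm outputs `M`: starting from cutoffs `|A|+1`
everywhere, a sequence of steps reaches minimal cutoffs inducing `M` -/
def MatchInst.Outputs (I : MatchInst A P) (f : (P → ℕ) → Prop) (ord : P → P → Prop)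
    (M : A → Option P) : Prop :=
  ∃ d : P → ℕ, Relation.ReflTransGen (I.AlgStep f ord) (fun _ => Fintype.card A + 1) d ∧
    (∀ p, ¬ I.DecStep f d p) ∧ M = I.inducedM d

end Algorithm

/-- the truthful instance: `a1: p2,p1`; `a2: p2`; `p1: a2,a1`; `p2: a2,a1`; capacities 1 -/
def I15 : MatchInst (Fin 2) (Fin 2) :=
  ⟨![[1, 0], [1]], ![[1, 0], [1, 0]], fun _ => 1⟩

/-- the instance where `a2` misreports her preferences as `p2,p1` -/
def I15' : MatchInst (Fin 2) (Fin 2) :=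
  ⟨![[1, 0], [1, 0]], ![[1, 0], [1, 0]], fun _ => 1⟩

/-- feasibility: total size at most 1 (one supervisor of budget 1 for both projects) -/
def f15 : (Fin 2 → ℕ) → Prop := fun v => v 0 + v 1 ≤ 1

section Helpers

instance : DecidablePred f15 := fun v => decidable_of_iff (v 0 + v 1 ≤ 1) Iff.rfl

lemma ind_comp (I : MatchInst (Fin 2) (Fin 2)) (d : Fin 2 → ℕ) (a : Fin 2)
    (s : Finset (Fin 2)) (l : List (Fin 2))
    (hs : univ.filter (fun p => I.Adm d a p) = s) (hl : s.sort (· ≤ ·) = l) :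
    I.inducedM d a = l.argmin fun p => I.rkA a p := by
  unfold MatchInst.inducedM; rw [hs, hl]

lemma sortE : (∅ : Finset (Fin 2)).sort (· ≤ ·) = [] := by simp
lemma sortS0 : ({0} : Finset (Fin 2)).sort (· ≤ ·) = [0] := by simp
lemma sortS1 : ({1} : Finset (Fin 2)).sort (· ≤ ·) = [1] := by simp
lemma sort01 : ({0, 1} : Finset (Fin 2)).sort (· ≤ ·) = [0, 1] := by
  rw [Finset.sort_insert (r := (· ≤ ·)) (by decide) (by decide)]; simp

-- induced matchings, truthful instance
lemma i23 : I15.inducedM ![2,3] = ![none, none] := by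
  funext a; fin_cases a
  · rw [ind_comp I15 _ _ ∅ [] (by rw [Finset.ext_iff]; decide) sortE]; decide
  · rw [ind_comp I15 _ _ ∅ [] (by rw [Finset.ext_iff]; decide) sortE]; decide

lemma i13 : I15.inducedM ![1,3] = ![some 0, none] := by
  funext a; fin_cases a
  · rw [ind_comp I15 _ _ {0} [0] (by rw [Finset.ext_iff]; decide) sortS0]; decide
  · rw [ind_comp I15 _ _ ∅ [] (by rw [Finset.ext_iff]; decide) sortE]; decide

lemma i03 : I15.inducedM ![0,3] = ![some 0, none] := by
  funext a; fin_cases a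
  · rw [ind_comp I15 _ _ {0} [0] (by rw [Finset.ext_iff]; decide) sortS0]; decide
  · rw [ind_comp I15 _ _ ∅ [] (by rw [Finset.ext_iff]; decide) sortE]; decide

lemma i02 : I15.inducedM ![0,2] = ![some 0, some 1] := by
  funext a; fin_cases a
  · rw [ind_comp I15 _ _ {0} [0] (by rw [Finset.ext_iff]; decide) sortS0]; decide
  · rw [ind_comp I15 _ _ {1} [1] (by rw [Finset.ext_iff]; decide) sortS1]; decide

-- induced matchings, misreported instance
lemma j23 : I15'.inducedM ![2,3] = ![none, some 0] := by
  funext a; fin_cases a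
  · rw [ind_comp I15' _ _ ∅ [] (by rw [Finset.ext_iff]; decide) sortE]; decide
  · rw [ind_comp I15' _ _ {0} [0] (by rw [Finset.ext_iff]; decide) sortS0]; decide

lemma j13 : I15'.inducedM ![1,3] = ![some 0, some 0] := by
  funext a; fin_cases a
  · rw [ind_comp I15' _ _ {0} [0] (by rw [Finset.ext_iff]; decide) sortS0]; decide
  · rw [ind_comp I15' _ _ {0} [0] (by rw [Finset.ext_iff]; decide) sortS0]; decide

lemma j22 : I15'.inducedM ![2,2] = ![none, some 1] := by
  funext a; fin_cases a
  · rw [ind_comp I15' _ _ ∅ [] (by rw [Finset.ext_iff]; decide) sortE]; decide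
  · rw [ind_comp I15' _ _ {0,1} [0,1] (by rw [Finset.ext_iff]; decide) sort01]; decide

lemma j12 : I15'.inducedM ![1,2] = ![some 0, some 1] := by
  funext a; fin_cases a
  · rw [ind_comp I15' _ _ {0} [0] (by rw [Finset.ext_iff]; decide) sortS0]; decide
  · rw [ind_comp I15' _ _ {0,1} [0,1] (by rw [Finset.ext_iff]; decide) sort01]; decide

lemma j21 : I15'.inducedM ![2,1] = ![some 1, some 1] := by
  funext a; fin_cases a
  · rw [ind_comp I15' _ _ {1} [1] (by rw [Finset.ext_iff]; decide) sortS1]; decide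
  · rw [ind_comp I15' _ _ {0,1} [0,1] (by rw [Finset.ext_iff]; decide) sort01]; decide

-- DecStep facts, truthful instance
lemma ds33 : I15.DecStep f15 ![3,3] 0 := by
  unfold MatchInst.DecStep
  rw [show MatchInst.decCut ![3,3] 0 = ![2,3] from by decide, i23]
  exact ⟨by decide, by decide⟩

lemma ds23 : I15.DecStep f15 ![2,3] 0 := by
  unfold MatchInst.DecStep
  rw [show MatchInst.decCut ![2,3] 0 = ![1,3] from by decide, i13]
  exact ⟨by decide, by decide⟩

lemma ds13 : I15.DecStep f15 ![1,3] 0 := by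
  unfold MatchInst.DecStep
  rw [show MatchInst.decCut ![1,3] 0 = ![0,3] from by decide, i03]
  exact ⟨by decide, by decide⟩

lemma nds03_0 : ¬ I15.DecStep f15 ![0,3] 0 := by
  intro h; obtain ⟨h1, _⟩ := h; exact absurd h1 (by decide)

lemma nds03_1 : ¬ I15.DecStep f15 ![0,3] 1 := by
  intro h; obtain ⟨_, h2⟩ := h
  rw [show MatchInst.decCut ![0,3] 1 = ![0,2] from by decide, i02] at h2
  exact absurd h2 (by decide)

-- DecStep facts, misreported instance
lemma es33 : I15'.DecStep f15 ![3,3] 0 := by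
  unfold MatchInst.DecStep
  rw [show MatchInst.decCut ![3,3] 0 = ![2,3] from by decide, j23]
  exact ⟨by decide, by decide⟩

lemma nes23_0 : ¬ I15'.DecStep f15 ![2,3] 0 := by
  intro h; obtain ⟨_, h2⟩ := h
  rw [show MatchInst.decCut ![2,3] 0 = ![1,3] from by decide, j13] at h2
  exact absurd h2 (by decide)

lemma es23_1 : I15'.DecStep f15 ![2,3] 1 := by
  unfold MatchInst.DecStep
  rw [show MatchInst.decCut ![2,3] 1 = ![2,2] from by decide, j22]
  exact ⟨by decide, by decide⟩

lemma nes22_0 : ¬ I15'.DecStep f15 ![2,2] 0 := by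
  intro h; obtain ⟨_, h2⟩ := h
  rw [show MatchInst.decCut ![2,2] 0 = ![1,2] from by decide, j12] at h2
  exact absurd h2 (by decide)

lemma nes22_1 : ¬ I15'.DecStep f15 ![2,2] 1 := by
  intro h; obtain ⟨_, h2⟩ := h
  rw [show MatchInst.decCut ![2,2] 1 = ![2,1] from by decide, j21] at h2
  exact absurd h2 (by decide)

lemma step_cases {I : MatchInst (Fin 2) (Fin 2)} {f : (Fin 2 → ℕ) → Prop} {d d' : Fin 2 → ℕ}
    (h : I.AlgStep f (· < ·) d d') :
    (I.DecStep f d 0 ∧ d' = MatchInst.decCut d 0) ∨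
      (¬ I.DecStep f d 0 ∧ I.DecStep f d 1 ∧ d' = MatchInst.decCut d 1) := by
  obtain ⟨p, hp, hmin, rfl⟩ := h
  fin_cases p
  · exact Or.inl ⟨hp, rfl⟩
  · exact Or.inr ⟨hmin 0 (by decide), hp, rfl⟩

lemma start_eq : (fun _ => Fintype.card (Fin 2) + 1 : Fin 2 → ℕ) = ![3,3] := by decide

lemma reach15 (d : Fin 2 → ℕ)
    (h : Relation.ReflTransGen (I15.AlgStep f15 (· < ·)) (fun _ => Fintype.card (Fin 2) + 1) d) :
    d = ![3,3] ∨ d = ![2,3] ∨ d = ![1,3] ∨ d = ![0,3] := by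
  induction h with
  | refl => exact Or.inl start_eq
  | tail _ hstep ih =>
    rcases ih with rfl | rfl | rfl | rfl <;>
      rcases step_cases hstep with ⟨h1, rfl⟩ | ⟨h1, h2, rfl⟩
    · exact Or.inr (Or.inl (by decide))
    · exact absurd ds33 h1
    · exact Or.inr (Or.inr (Or.inl (by decide)))
    · exact absurd ds23 h1
    · exact Or.inr (Or.inr (Or.inr (by decide)))
    · exact absurd ds13 h1
    · exact absurd h1 nds03_0
    · exact absurd h2 nds03_1

lemma reach15' (d : Fin 2 → ℕ)
    (h : Relation.ReflTransGen (I15'.AlgStep f15 (· < ·)) (fun _ => Fintype.card (Fin 2) + 1) d) :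
    d = ![3,3] ∨ d = ![2,3] ∨ d = ![2,2] := by
  induction h with
  | refl => exact Or.inl start_eq
  | tail _ hstep ih =>
    rcases ih with rfl | rfl | rfl <;>
      rcases step_cases hstep with ⟨h1, rfl⟩ | ⟨h1, h2, rfl⟩
    · exact Or.inr (Or.inl (by decide))
    · exact absurd es33 h1
    · exact absurd h1 nes23_0
    · exact Or.inr (Or.inr (by decide))
    · exact absurd h1 nes22_0
    · exact absurd h2 nes22_1

end Helpers

/-- the cutoff-decreasing algorithm (processing order `(p1, p2)`) is not
strategyproof: truthfully it outputs `{(a1,p1)}`, but if `a2` misreports it outputs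
`{(a2,p2)}`, which `a2` strictly prefers to being unmatched. -/
theorem algorithm_not_strategyproof :
    (∀ M, I15.Outputs f15 (· < ·) M ↔ M = ![some 0, none]) ∧
    (∀ M, I15'.Outputs f15 (· < ·) M ↔ M = ![none, some 1]) ∧
    I15.Prefers 1 1 none := by
  refine ⟨fun M => ⟨?_, ?_⟩, fun M => ⟨?_, ?_⟩, ?_⟩
  · rintro ⟨d, hr, hterm, rfl⟩
    rcases reach15 d hr with rfl | rfl | rfl | rfl
    · exact absurd ds33 (hterm 0)
    · exact absurd ds23 (hterm 0)
    · exact absurd ds13 (hterm 0)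
    · exact i03
  · rintro rfl
    have st1 : I15.AlgStep f15 (· < ·) ![3,3] ![2,3] := by
      unfold MatchInst.AlgStep
      refine ⟨0, ds33, ?_, by decide⟩
      intro q hq; fin_cases q <;> exact absurd hq (by decide)
    have st2 : I15.AlgStep f15 (· < ·) ![2,3] ![1,3] := by
      unfold MatchInst.AlgStep
      refine ⟨0, ds23, ?_, by decide⟩
      intro q hq; fin_cases q <;> exact absurd hq (by decide)
    have st3 : I15.AlgStep f15 (· < ·) ![1,3] ![0,3] := by
      unfold MatchInst.AlgStep
      refine ⟨0, ds13, ?_, by decide⟩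
      intro q hq; fin_cases q <;> exact absurd hq (by decide)
    refine ⟨![0,3], ?_, ?_, i03.symm⟩
    · rw [start_eq]
      exact Relation.ReflTransGen.tail
        (Relation.ReflTransGen.tail (Relation.ReflTransGen.tail .refl st1) st2) st3
    · intro p; fin_cases p
      · exact nds03_0
      · exact nds03_1
  · rintro ⟨d, hr, hterm, rfl⟩
    rcases reach15' d hr with rfl | rfl | rfl
    · exact absurd es33 (hterm 0)
    · exact absurd es23_1 (hterm 1)
    · exact j22
  · rintro rfl
    have st1 : I15'.AlgStep f15 (· < ·) ![3,3] ![2,3] := by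
      unfold MatchInst.AlgStep
      refine ⟨0, es33, ?_, by decide⟩
      intro q hq; fin_cases q <;> exact absurd hq (by decide)
    have st2 : I15'.AlgStep f15 (· < ·) ![2,3] ![2,2] := by
      unfold MatchInst.AlgStep
      refine ⟨1, es23_1, ?_, by decide⟩
      intro q hq; fin_cases q
      · exact nes23_0
      · exact absurd hq (by decide)
    refine ⟨![2,2], ?_, ?_, j22.symm⟩
    · rw [start_eq]
      exact Relation.ReflTransGen.tail (Relation.ReflTransGen.tail .refl st1) st2
    · intro p; fin_cases p
      · exact nes22_0
      · exact nes22_1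
  · unfold MatchInst.Prefers MatchInst.accA
    exact ⟨by decide, fun q h => nomatch h⟩
end

section
/- In the classical college admissions model (where every matching respecting project capacities is feasible), a matching is cutoff stable if and only if it is stable in the sense of Gale and Shapley, and likewise strong stability and weak stability both coincide with Gale-Shapley stability. -/
open Finset

variable {A P : Type} [Fintype A] [Fintype P] [DecidableEq A] [DecidableEq P]

/-- Gale–Shapley stability: no blocking pair at all. -/
def MatchInst.GSStable (I : MatchInst A P) (M : A → Option P) : Prop :=
  I.IsMatching M ∧ ∀ a p, ¬ I.Blocking M a p

/-- the trivial feasibility function declaring every capacity-respecting matching feasible -/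
def capFeas (I : MatchInst A P) : (P → ℕ) → Prop := fun v => ∀ p, v p ≤ I.cap p


lemma mcount_swap_le {A P : Type} [Fintype A] [Fintype P] [DecidableEq A] [DecidableEq P]
    (M : A → Option P) (a : A) (p q : P) :
    mcount (swap M a p) q ≤ addCount M p q := by
  unfold mcount swap addCount
  by_cases h : q = p
  · subst h
    have hsub : (univ.filter fun b => Function.update M a (some q) b = some q)
        ⊆ insert a (univ.filter fun b => M b = some q) := by
      intro b hb
      simp only [mem_filter, mem_univ, true_and] at hb
      by_cases hba : b = a
      · simp [hba]
      · rw [Function.update_of_ne hba] at hb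
        simp [mem_insert, mem_filter, hb]
    simp only [if_pos rfl]
    calc (univ.filter fun b => Function.update M a (some q) b = some q).card
        ≤ (insert a (univ.filter fun b => M b = some q)).card := card_le_card hsub
      _ ≤ (univ.filter fun b => M b = some q).card + 1 := card_insert_le _ _
  · have hsub : (univ.filter fun b => Function.update M a (some p) b = some q)
        ⊆ (univ.filter fun b => M b = some q) := by
      intro b hb
      simp only [mem_filter, mem_univ, true_and] at hb ⊢
      by_cases hba : b = a
      · subst hba; rw [Function.update_self] at hb
        exact absurd (Option.some.inj hb).symm h
      · rwa [Function.update_of_ne hba] at hb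
    simp only [if_neg h]
    simpa [mcount] using card_le_card hsub

/-- in the classical college admissions model, cutoff stability, strong
stability and weak stability all coincide with Gale–Shapley stability. -/
theorem classical_stabilities_coincide (I : MatchInst A P) (M : A → Option P)
    (hA : ∀ a, (I.prefA a).Nodup) (hP : ∀ p, (I.prefP p).Nodup) :
    (I.CutoffStable (capFeas I) M ↔ I.GSStable M) ∧
    (I.StronglyStable (capFeas I) M ↔ I.GSStable M) ∧
    (I.WeaklyStable (capFeas I) M ↔ I.GSStable M) := by
  classical
  -- feasibility of adding one applicant at a project with slack
  have haddfeas : ∀ p, (∀ q, mcount M q ≤ I.cap q) → mcount M p < I.cap p →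
      capFeas I (addCount M p) := by
    intro p hM hlt q
    unfold addCount
    by_cases h : q = p
    · subst h; simpa using hlt
    · simp [h, hM q]
  have hswapfeas : ∀ a p, (∀ q, mcount M q ≤ I.cap q) → mcount M p < I.cap p →
      capFeas I (mcount (swap M a p)) := by
    intro a p hM hlt q
    exact le_trans (mcount_swap_le M a p q) (haddfeas p hM hlt q)
  -- Prefers implies not currently matched there
  have hprefne : ∀ a p, I.Prefers a p (M a) → M a ≠ some p := by
    intro a p hpref h
    exact lt_irrefl _ (hpref.2 p h)
  -- GS implies Fair
  have gs_fair : I.GSStable M → I.Fair M := by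
    rintro ⟨hM, hnb⟩ a p hne hpref a' ha'
    have haccP' : a' ∈ I.prefP p := (hM.1 a' p ha').2
    by_cases hacc : a ∈ I.prefP p
    · by_contra hnlt
      push_neg at hnlt
      rcases lt_or_eq_of_le hnlt with h | h
      · exact hnb a p ⟨hpref, Or.inr ⟨a', ha', h⟩⟩
      · have : a = a' := (List.idxOf_inj hacc).mp h
        exact hne (this ▸ ha')
    · have h1 : I.rkP p a = (I.prefP p).length := List.idxOf_eq_length_iff.mpr hacc
      have h2 : I.rkP p a' < (I.prefP p).length := List.idxOf_lt_length_iff.mpr haccP'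
      exact h1 ▸ h2
  -- Fair kills type-2 blocking
  have fair_no2 : I.Fair M → ∀ a p, I.Prefers a p (M a) →
      ¬ ∃ a', M a' = some p ∧ I.rkP p a < I.rkP p a' := by
    rintro hfair a p hpref ⟨a', ha', hr⟩
    exact lt_asymm hr (hfair a p (hprefne a p hpref) hpref a' ha')
  refine ⟨?_, ?_, ?_⟩
  · -- Cutoff ↔ GS
    constructor
    · rintro ⟨hM, hfair, hf, hcnw⟩
      refine ⟨hM, ?_⟩
      rintro a p ⟨hpref, hcase⟩
      rcases hcase with ⟨hlt, hacc⟩ | h2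
      · rcases hcnw a p (hprefne a p hpref) hacc hpref with h | ⟨a', _, _, _, _, h⟩ | h
        · exact h (hswapfeas a p hM.2 hlt)
        · exact h (hswapfeas a' p hM.2 hlt)
        · exact absurd hlt (not_lt.mpr h)
      · exact fair_no2 hfair a p hpref h2
    · rintro hGS
      obtain ⟨hM, hnb⟩ := hGS
      refine ⟨hM, gs_fair ⟨hM, hnb⟩, hM.2, ?_⟩
      intro a p hne hacc hpref
      refine Or.inr (Or.inr ?_)
      by_contra h
      push_neg at h
      exact hnb a p ⟨hpref, Or.inl ⟨h, hacc⟩⟩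
  · -- Strong ↔ GS
    constructor
    · rintro ⟨hM, hf, hblk⟩
      refine ⟨hM, ?_⟩
      rintro a p hb
      obtain ⟨h1, h2⟩ := hblk a p hb
      rcases hb.2 with ⟨hlt, hacc⟩ | ⟨a', ha', hr⟩
      · exact h2 (hswapfeas a p hM.2 hlt)
      · exact lt_asymm hr (h1 a' ha')
    · rintro ⟨hM, hnb⟩
      exact ⟨hM, hM.2, fun a p hb => absurd hb (hnb a p)⟩
  · -- Weak ↔ GS
    constructor
    · rintro ⟨hM, hfair, hf, hwnw⟩
      refine ⟨hM, ?_⟩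
      rintro a p ⟨hpref, hcase⟩
      rcases hcase with ⟨hlt, hacc⟩ | h2
      · rcases hwnw a p (hprefne a p hpref) hacc hpref with h | h
        · exact h (haddfeas p hM.2 hlt)
        · exact absurd hlt (not_lt.mpr h)
      · exact fair_no2 hfair a p hpref h2
    · rintro hGS
      obtain ⟨hM, hnb⟩ := hGS
      refine ⟨hM, gs_fair ⟨hM, hnb⟩, hM.2, ?_⟩
      intro a p hne hacc hpref
      refine Or.inr ?_
      by_contra h
      push_neg at h
      exact hnb a p ⟨hpref, Or.inl ⟨h, hacc⟩⟩
end
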